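/- Let G = ⟨Y | R⟩, let Q = ⟨Z | T⟩ act on Y by permutations with Q(R) = R, and suppose the induced semidirect product presentation holds: G ⋊ Q ≅ ⟨Y₀, Z | R̂₀, T, [Stab_Q(y), y] for y ∈ Y₀⟩ (as in Lemma 'burnside-1'). If additionally Q ≤ G acts by conjugation, Q is finitely presented, the numbers of Q-orbits on Y and on R are finite, and each stabilizer Stab_Q(y) (y ∈ Y₀) is finitely generated, then G is finitely presented. -/

import Mathlib

/-- A group is finitely presented if it is isomorphic to the quotient of a free
group on finitely many generators by the normal closure of finitely many
relators. -/
def IsFinitelyPresentedGroup (G : Type*) [Group G] : Prop :=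
  ∃ (n : ℕ) (R : Set (FreeGroup (Fin n))), R.Finite ∧ Nonempty (PresentedGroup R ≃* G)

/-- Burnside procedure: let `G = ⟨Y ∣ R⟩` and let `Q ≤ G` be a subgroup acting
by permutations on `Y` with `Q(R) = R`, in such a way that the induced action of
`Q` on `G` is conjugation inside `G`. If `Q` is finitely presented, the numbers
of `Q`-orbits on `Y` and on `R` are finite, and each stabilizer `Stab_Q(y)` is
finitely generated, then `G` is finitely presented. -/
lemma fp_of_finite_presentation {α : Type*} [Finite α] (S : Set (FreeGroup α)) (hS : S.Finite)
    {G : Type*} [Group G] (e : PresentedGroup S ≃* G) : IsFinitelyPresentedGroup G := by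
  have := Fintype.ofFinite α
  let eq : α ≃ Fin (Fintype.card α) := Fintype.equivFin α
  exact ⟨Fintype.card α, FreeGroup.freeGroupCongr eq '' S, hS.image _,
    ⟨((PresentedGroup.equivPresentedGroup S eq).symm.trans e)⟩⟩

lemma presented_mk_rel_one {α : Type*} {S : Set (FreeGroup α)} {r : FreeGroup α} (hr : r ∈ S) :
    PresentedGroup.mk S r = 1 :=
  (QuotientGroup.eq_one_iff r).mpr (Subgroup.subset_normalClosure hr)

lemma fp_of_retract_presented {G : Type*} [Group G] {n : ℕ} (S : Set (FreeGroup (Fin n)))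
    (hS : S.Finite) (χ : G →* PresentedGroup S) (ψ : PresentedGroup S →* G)
    (h : ∀ g, ψ (χ g) = g) : IsFinitelyPresentedGroup G := by
  classical
  set ℓ : PresentedGroup S → FreeGroup (Fin n) :=
    Function.surjInv (PresentedGroup.mk_surjective S) with hℓdef
  have hℓ : ∀ p, PresentedGroup.mk S (ℓ p) = p := fun p =>
    Function.surjInv_eq (PresentedGroup.mk_surjective S) p
  set S' : Set (FreeGroup (Fin n)) :=
    S ∪ Set.range (fun g : Fin n =>
      (FreeGroup.of g)⁻¹ * ℓ (χ (ψ (PresentedGroup.mk S (FreeGroup.of g))))) with hS'def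
  have hS'fin : S'.Finite := hS.union (Set.finite_range _)
  have hliftf : FreeGroup.lift (fun g : Fin n => ψ (PresentedGroup.mk S (FreeGroup.of g)))
      = ψ.comp (PresentedGroup.mk S) := by
    apply FreeGroup.ext_hom; intro a; simp
  have hα : ∀ r ∈ S', FreeGroup.lift
      (fun g : Fin n => ψ (PresentedGroup.mk S (FreeGroup.of g))) r = 1 := by
    intro r hr
    rcases hr with hr | ⟨g, rfl⟩
    · rw [hliftf]; simp [presented_mk_rel_one hr]
    · rw [map_mul, map_inv, hliftf]
      simp only [MonoidHom.comp_apply, hℓ]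
      rw [h (ψ (PresentedGroup.mk S (FreeGroup.of g)))]
      simp
  set α : PresentedGroup S' →* G := PresentedGroup.toGroup hα with hαdef
  have hθrel : ∀ r ∈ S, FreeGroup.lift
      (fun g : Fin n => (PresentedGroup.of g : PresentedGroup S')) r = 1 := by
    intro r hr
    have : FreeGroup.lift (fun g : Fin n => (PresentedGroup.of g : PresentedGroup S'))
        = PresentedGroup.mk S' := by
      apply FreeGroup.ext_hom; intro a; simp [PresentedGroup.of]
    rw [this]
    exact presented_mk_rel_one (Or.inl hr)
  set θ : PresentedGroup S →* PresentedGroup S' := PresentedGroup.toGroup hθrel with hθdef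
  have hθmk : ∀ w, θ (PresentedGroup.mk S w) = PresentedGroup.mk S' w := by
    intro w
    have : θ.comp (PresentedGroup.mk S) = PresentedGroup.mk S' := by
      apply FreeGroup.ext_hom; intro a
      simp [hθdef, PresentedGroup.of, MonoidHom.comp_apply]
      rfl
    exact DFunLike.congr_fun this w
  set β : G →* PresentedGroup S' := θ.comp χ with hβdef
  have hαθ : α.comp θ = ψ := by
    apply PresentedGroup.ext; intro x
    have : θ (PresentedGroup.of x) = (PresentedGroup.of x : PresentedGroup S') :=
      PresentedGroup.toGroup.of hθrel
    simp only [MonoidHom.comp_apply, this]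
    exact PresentedGroup.toGroup.of hα
  have hαβ : α.comp β = MonoidHom.id G := by
    ext g
    simp only [hβdef, MonoidHom.comp_apply, MonoidHom.id_apply]
    have := DFunLike.congr_fun hαθ (χ g)
    simp only [MonoidHom.comp_apply] at this
    rw [this, h]
  have hβα : β.comp α = MonoidHom.id (PresentedGroup S') := by
    apply PresentedGroup.ext; intro x
    simp only [MonoidHom.comp_apply, MonoidHom.id_apply]
    have h1 : α (PresentedGroup.of x) = ψ (PresentedGroup.mk S (FreeGroup.of x)) :=
      PresentedGroup.toGroup.of hα
    rw [h1]
    set p := χ (ψ (PresentedGroup.mk S (FreeGroup.of x))) with hp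
    have h3 : θ p = PresentedGroup.mk S' (ℓ p) := by rw [← hℓ p, hθmk, hℓ p]
    have h4 : (FreeGroup.of x)⁻¹ * ℓ p ∈ S' := Or.inr ⟨x, rfl⟩
    have h5 : PresentedGroup.mk S' ((FreeGroup.of x)⁻¹ * ℓ p) = 1 := presented_mk_rel_one h4
    rw [map_mul, map_inv] at h5
    have h6 : PresentedGroup.mk S' (ℓ p) = PresentedGroup.mk S' (FreeGroup.of x) := by
      have h7 := mul_eq_one_iff_inv_eq.mp h5
      rw [← h7]
      simp
    show θ p = _
    rw [h3, h6]; rfl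
  exact ⟨n, S', hS'fin, ⟨MonoidHom.toMulEquiv α β hβα hαβ⟩⟩

lemma fp_of_retract {G : Type*} [Group G] {P : Type*} [Group P]
    (hP : IsFinitelyPresentedGroup P) (χ : G →* P) (ψ : P →* G)
    (h : ∀ g, ψ (χ g) = g) : IsFinitelyPresentedGroup G := by
  obtain ⟨n, S, hSfin, ⟨e⟩⟩ := hP
  exact fp_of_retract_presented S hSfin (e.symm.toMonoidHom.comp χ) (ψ.comp e.toMonoidHom)
    (fun g => by simp [h])


theorem burnside_procedure (Y : Type*) (R : Set (FreeGroup Y))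
    (Q : Subgroup (PresentedGroup R)) [MulAction Q Y]
    (hR : ∀ q : Q, (FreeGroup.map (fun y => q • y)) '' R = R)
    (hconj : ∀ (q : Q) (w : FreeGroup Y),
      PresentedGroup.mk R (FreeGroup.map (fun y => q • y) w)
        = (q : PresentedGroup R) * PresentedGroup.mk R w * (q : PresentedGroup R)⁻¹)
    (hQ : IsFinitelyPresentedGroup Q)
    (hYorb : ∃ Y₀ : Finset Y, ∀ y : Y, ∃ (q : Q), ∃ y₀ ∈ Y₀, y = q • y₀)
    (hRorb : ∃ R₀ ⊆ R, R₀.Finite ∧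
      ∀ r ∈ R, ∃ (q : Q), ∃ r₀ ∈ R₀, r = FreeGroup.map (fun y => q • y) r₀)
    (hstab : ∀ y : Y, (MulAction.stabilizer Q y).FG) :
    IsFinitelyPresentedGroup (PresentedGroup R) := by
  classical
  obtain ⟨n, T, hTfin, ⟨eQ⟩⟩ := hQ
  obtain ⟨Y₀, hY₀⟩ := hYorb
  obtain ⟨R₀, hR₀R, hR₀fin, hR₀⟩ := hRorb
  choose q0 y0 hy0mem hy0 using hY₀
  choose F hF using hstab
  -- word lifts in the presentation of Q
  set word : Q → FreeGroup (Fin n) :=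
    fun q => Function.surjInv (PresentedGroup.mk_surjective T) (eQ.symm q) with hworddef
  have hword : ∀ q, PresentedGroup.mk T (word q) = eQ.symm q := fun q =>
    Function.surjInv_eq (PresentedGroup.mk_surjective T) _
  -- chosen elements moving a to b
  set pq : Y → Y → Q := fun a b => if hab : ∃ h : Q, h • a = b then hab.choose else 1 with hpqdef
  have hpq : ∀ a b : Y, (∃ h : Q, h • a = b) → pq a b • a = b := by
    intro a b hab
    simp only [hpqdef, dif_pos hab]
    exact hab.choose_spec
  -- the new generating type
  set emb : FreeGroup (Fin n) →* FreeGroup ({y : Y // y ∈ Y₀} ⊕ Fin n) :=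
    FreeGroup.map Sum.inr with hembdef
  set cw : Q → {y : Y // y ∈ Y₀} → FreeGroup ({y : Y // y ∈ Y₀} ⊕ Fin n) :=
    fun q a => emb (word q) * FreeGroup.of (Sum.inl a) * (emb (word q))⁻¹ with hcwdef
  set φ : FreeGroup Y →* FreeGroup ({y : Y // y ∈ Y₀} ⊕ Fin n) :=
    FreeGroup.lift (fun y => cw (q0 y) ⟨y0 y, hy0mem y⟩) with hφdef
  set S1 : Set (FreeGroup ({y : Y // y ∈ Y₀} ⊕ Fin n)) := ⇑emb '' T with hS1def
  set S2 : Set (FreeGroup ({y : Y // y ∈ Y₀} ⊕ Fin n)) := ⋃ a : {y : Y // y ∈ Y₀},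
    (fun s : Q => cw s a * (FreeGroup.of (Sum.inl a))⁻¹) '' ↑(F ↑a) with hS2def
  set S3 : Set (FreeGroup ({y : Y // y ∈ Y₀} ⊕ Fin n)) :=
    ⋃ (a : {y : Y // y ∈ Y₀}) (b : {y : Y // y ∈ Y₀}),
      {w | (∃ h : Q, h • (↑a : Y) = ↑b) ∧
        w = cw (pq ↑a ↑b) a * (FreeGroup.of (Sum.inl b))⁻¹} with hS3def
  set S4 : Set (FreeGroup ({y : Y // y ∈ Y₀} ⊕ Fin n)) := ⇑φ '' R₀ with hS4def
  set S : Set (FreeGroup ({y : Y // y ∈ Y₀} ⊕ Fin n)) := S1 ∪ S2 ∪ S3 ∪ S4 with hSdef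
  have hSfin : S.Finite := by
    refine (((hTfin.image _).union ?_).union ?_).union (hR₀fin.image _)
    · exact Set.finite_iUnion fun a => (F (↑a : Y)).finite_toSet.image _
    · refine Set.finite_iUnion fun a => Set.finite_iUnion fun b => ?_
      exact (Set.finite_singleton (cw (pq ↑a ↑b) a * (FreeGroup.of (Sum.inl b))⁻¹)).subset
        (by rintro w ⟨-, rfl⟩; exact Set.mem_singleton _)
  -- membership helpers
  have hmemS1 : ∀ t ∈ T, emb t ∈ S := fun t ht =>
    Set.mem_union_left _ (Set.mem_union_left _ (Set.mem_union_left _ ⟨t, ht, rfl⟩))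
  have hmemS2 : ∀ (a : {y : Y // y ∈ Y₀}) (s : Q), s ∈ F (↑a : Y) →
      cw s a * (FreeGroup.of (Sum.inl a))⁻¹ ∈ S := fun a s hs =>
    Set.mem_union_left _ (Set.mem_union_left _ (Set.mem_union_right _
      (Set.mem_iUnion.mpr ⟨a, ⟨s, hs, rfl⟩⟩)))
  have hmemS3 : ∀ (a b : {y : Y // y ∈ Y₀}), (∃ h : Q, h • (↑a : Y) = ↑b) →
      cw (pq ↑a ↑b) a * (FreeGroup.of (Sum.inl b))⁻¹ ∈ S := fun a b hab =>
    Set.mem_union_left _ (Set.mem_union_right _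
      (Set.mem_iUnion.mpr ⟨a, Set.mem_iUnion.mpr ⟨b, ⟨hab, rfl⟩⟩⟩))
  have hmemS4 : ∀ r₀ ∈ R₀, φ r₀ ∈ S := fun r₀ h =>
    Set.mem_union_right _ ⟨r₀, h, rfl⟩
  -- the target homomorphism data
  set fι : ({y : Y // y ∈ Y₀} ⊕ Fin n) → PresentedGroup R :=
    Sum.elim (fun a => PresentedGroup.mk R (FreeGroup.of ↑a))
      (fun z => ((eQ (PresentedGroup.of z) : Q) : PresentedGroup R)) with hfιdef
  have hconj1 : ∀ (q : Q) (y : Y), PresentedGroup.mk R (FreeGroup.of (q • y)) =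
      (q : PresentedGroup R) * PresentedGroup.mk R (FreeGroup.of y) * (q : PresentedGroup R)⁻¹ := by
    intro q y
    have := hconj q (FreeGroup.of y)
    simpa using this
  have hlift_emb : ∀ w : FreeGroup (Fin n),
      FreeGroup.lift fι (emb w) = ((eQ (PresentedGroup.mk T w) : Q) : PresentedGroup R) := by
    intro w
    have : (FreeGroup.lift fι).comp emb
        = Q.subtype.comp (eQ.toMonoidHom.comp (PresentedGroup.mk T)) := by
      apply FreeGroup.ext_hom; intro z
      simp [hembdef, hfιdef, PresentedGroup.of]
    exact DFunLike.congr_fun this w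
  have hlift_word : ∀ q : Q, FreeGroup.lift fι (emb (word q)) = (q : PresentedGroup R) := by
    intro q; rw [hlift_emb, hword]; simp
  have hlift_cw : ∀ (q : Q) (a : {y : Y // y ∈ Y₀}), FreeGroup.lift fι (cw q a)
      = (q : PresentedGroup R) * PresentedGroup.mk R (FreeGroup.of ↑a)
        * (q : PresentedGroup R)⁻¹ := by
    intro q a
    simp only [hcwdef, map_mul, map_inv, hlift_word, FreeGroup.lift_apply_of, hfιdef, Sum.elim_inl]
    rw [← hfιdef, hlift_word]
  have hlift_φ : ∀ w : FreeGroup Y, FreeGroup.lift fι (φ w) = PresentedGroup.mk R w := by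
    intro w
    have : (FreeGroup.lift fι).comp φ = PresentedGroup.mk R := by
      apply FreeGroup.ext_hom; intro y
      simp only [MonoidHom.comp_apply, hφdef, FreeGroup.lift_apply_of]
      rw [hlift_cw]
      conv_rhs => rw [hy0 y]
      exact (hconj1 (q0 y) (y0 y)).symm
    exact DFunLike.congr_fun this w
  -- the retraction ψ
  have hψrel : ∀ r ∈ S, FreeGroup.lift fι r = 1 := by
    intro r hr
    rcases hr with ((hr | hr) | hr) | hr
    · obtain ⟨t, ht, rfl⟩ := hr
      rw [hlift_emb, presented_mk_rel_one ht]
      simp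
    · rw [hS2def] at hr
      obtain ⟨a, hmem⟩ := Set.mem_iUnion.mp hr
      obtain ⟨s, hs, rfl⟩ := hmem
      have hsstab : s • (↑a : Y) = ↑a := by
        have : s ∈ MulAction.stabilizer Q (↑a : Y) := by
          rw [← hF (↑a : Y)]; exact Subgroup.subset_closure hs
        exact this
      rw [map_mul, map_inv, hlift_cw, ← hconj1, hsstab]
      simp [FreeGroup.lift_apply_of, hfιdef]
    · rw [hS3def] at hr
      obtain ⟨a, hmem⟩ := Set.mem_iUnion.mp hr
      obtain ⟨b, hmem⟩ := Set.mem_iUnion.mp hmem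
      obtain ⟨hab, rfl⟩ := hmem
      have hb : pq ↑a ↑b • (↑a : Y) = ↑b := hpq _ _ hab
      rw [map_mul, map_inv, hlift_cw, ← hconj1, hb]
      simp [FreeGroup.lift_apply_of, hfιdef]
    · obtain ⟨r₀, hr₀, rfl⟩ := hr
      rw [hlift_φ]
      exact presented_mk_rel_one (hR₀R hr₀)
  set ψ : PresentedGroup S →* PresentedGroup R := PresentedGroup.toGroup hψrel with hψdef
  have hψmk : ∀ w, ψ (PresentedGroup.mk S w) = FreeGroup.lift fι w := fun w => rfl
  -- the map Θ : Q →* PresentedGroup S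
  have hτrel : ∀ t ∈ T, FreeGroup.lift (fun z : Fin n =>
      (PresentedGroup.of (Sum.inr z) : PresentedGroup S)) t = 1 := by
    intro t ht
    have : FreeGroup.lift (fun z : Fin n => (PresentedGroup.of (Sum.inr z) : PresentedGroup S))
        = (PresentedGroup.mk S).comp emb := by
      apply FreeGroup.ext_hom; intro z
      simp [hembdef, PresentedGroup.of]
    rw [this]
    exact presented_mk_rel_one (hmemS1 t ht)
  set τ : PresentedGroup T →* PresentedGroup S := PresentedGroup.toGroup hτrel with hτdef
  set Θ : Q →* PresentedGroup S := τ.comp eQ.symm.toMonoidHom with hΘdef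
  have hτmk : ∀ w, τ (PresentedGroup.mk T w) = PresentedGroup.mk S (emb w) := by
    intro w
    have : τ.comp (PresentedGroup.mk T) = (PresentedGroup.mk S).comp emb := by
      apply FreeGroup.ext_hom; intro z
      simp only [MonoidHom.comp_apply]
      have h1 : PresentedGroup.mk T (FreeGroup.of z) = PresentedGroup.of z := rfl
      rw [h1, hτdef]
      rw [PresentedGroup.toGroup.of hτrel]
      simp [hembdef, PresentedGroup.of]
    exact DFunLike.congr_fun this w
  have hΘ : ∀ q : Q, Θ q = PresentedGroup.mk S (emb (word q)) := by
    intro q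
    show τ (eQ.symm q) = _
    rw [← hword q, hτmk]
  have hmkcw : ∀ (q : Q) (a : {y : Y // y ∈ Y₀}), PresentedGroup.mk S (cw q a)
      = Θ q * PresentedGroup.mk S (FreeGroup.of (Sum.inl a)) * (Θ q)⁻¹ := by
    intro q a
    simp only [hcwdef, map_mul, map_inv, hΘ]
  -- the key conjugation lemma
  have hkey : ∀ (h : Q) (a b : {y : Y // y ∈ Y₀}), h • (↑a : Y) = ↑b →
      Θ h * PresentedGroup.mk S (FreeGroup.of (Sum.inl a)) * (Θ h)⁻¹
        = PresentedGroup.mk S (FreeGroup.of (Sum.inl b)) := by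
    intro h a b hab
    set A := PresentedGroup.mk S (FreeGroup.of (Sum.inl a)) with hA
    set B := PresentedGroup.mk S (FreeGroup.of (Sum.inl b)) with hB
    have hcomm : ∀ s : Q, s ∈ MulAction.stabilizer Q (↑a : Y) → Θ s * A = A * Θ s := by
      intro s hs
      rw [← hF (↑a : Y)] at hs
      have hle : Subgroup.closure (↑(F (↑a : Y)) : Set Q)
          ≤ Subgroup.comap Θ (Subgroup.centralizer {A}) := by
        rw [Subgroup.closure_le]
        intro s hsF
        have hrel : PresentedGroup.mk S (cw s a * (FreeGroup.of (Sum.inl a))⁻¹) = 1 :=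
          presented_mk_rel_one (hmemS2 a s hsF)
        rw [map_mul, map_inv, hmkcw] at hrel
        have heq : Θ s * A * (Θ s)⁻¹ = A := mul_inv_eq_one.mp hrel
        simp only [Set.mem_preimage, SetLike.mem_coe, Subgroup.mem_comap,
          Subgroup.mem_centralizer_iff]
        intro x hx
        rw [Set.mem_singleton_iff] at hx
        subst hx
        conv_lhs => rw [← heq]
        group
      have hmem := hle hs
      rw [Subgroup.mem_comap] at hmem
      have := Subgroup.mem_centralizer_iff.mp hmem A (Set.mem_singleton _)
      exact this.symm
    have hb : pq ↑a ↑b • (↑a : Y) = ↑b := hpq _ _ ⟨h, hab⟩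
    have hpairrel : Θ (pq ↑a ↑b) * A * (Θ (pq ↑a ↑b))⁻¹ = B := by
      have hrel : PresentedGroup.mk S (cw (pq ↑a ↑b) a * (FreeGroup.of (Sum.inl b))⁻¹) = 1 :=
        presented_mk_rel_one (hmemS3 a b ⟨h, hab⟩)
      rw [map_mul, map_inv, hmkcw] at hrel
      exact mul_inv_eq_one.mp hrel
    set s : Q := (pq ↑a ↑b)⁻¹ * h with hsdef
    have hsstab : s ∈ MulAction.stabilizer Q (↑a : Y) := by
      rw [MulAction.mem_stabilizer_iff, hsdef, mul_smul, hab, inv_smul_eq_iff]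
      exact hb.symm
    have hcs := hcomm s hsstab
    have hsA : Θ s * A * (Θ s)⁻¹ = A := by rw [hcs]; group
    have hΘh : Θ h = Θ (pq ↑a ↑b) * Θ s := by
      rw [← map_mul]; congr 1; rw [hsdef]; group
    have hmain : Θ h * A * (Θ h)⁻¹
        = Θ (pq ↑a ↑b) * (Θ s * A * (Θ s)⁻¹) * (Θ (pq ↑a ↑b))⁻¹ := by
      rw [hΘh]; group
    rw [hmain, hsA, hpairrel]
  -- conjugation formula at the level of S
  have hmkφ_of : ∀ y : Y, PresentedGroup.mk S (φ (FreeGroup.of y))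
      = Θ (q0 y) * PresentedGroup.mk S (FreeGroup.of (Sum.inl ⟨y0 y, hy0mem y⟩))
        * (Θ (q0 y))⁻¹ := by
    intro y
    rw [hφdef]
    rw [FreeGroup.lift_apply_of]
    exact hmkcw _ _
  have hkey2 : ∀ (q : Q) (w : FreeGroup Y),
      PresentedGroup.mk S (φ (FreeGroup.map (fun y => q • y) w))
        = Θ q * PresentedGroup.mk S (φ w) * (Θ q)⁻¹ := by
    intro q w
    have hhom : ((PresentedGroup.mk S).comp φ).comp (FreeGroup.map (fun y => q • y))
        = (MulAut.conj (Θ q)).toMonoidHom.comp ((PresentedGroup.mk S).comp φ) := by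
      apply FreeGroup.ext_hom; intro y
      simp only [MonoidHom.comp_apply, FreeGroup.map.of, MulEquiv.toMonoidHom_eq_coe,
        MonoidHom.coe_coe, MulAut.conj_apply]
      rw [hmkφ_of, hmkφ_of]
      have hab : ((q0 (q • y))⁻¹ * (q * q0 y)) •
          ((↑(⟨y0 y, hy0mem y⟩ : {y : Y // y ∈ Y₀}) : Y))
          = (↑(⟨y0 (q • y), hy0mem (q • y)⟩ : {y : Y // y ∈ Y₀}) : Y) := by
        show ((q0 (q • y))⁻¹ * (q * q0 y)) • (y0 y) = y0 (q • y)
        rw [mul_smul, mul_smul, ← hy0 y, inv_smul_eq_iff]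
        exact hy0 (q • y)
      have hk := hkey _ _ _ hab
      rw [← hk]
      simp only [map_mul, map_inv]
      group
    have := DFunLike.congr_fun hhom w
    simpa using this
  -- the section χ
  have hχrel : ∀ r ∈ R,
      FreeGroup.lift (fun y => PresentedGroup.mk S (φ (FreeGroup.of y))) r = 1 := by
    intro r hr
    have hl : FreeGroup.lift (fun y => PresentedGroup.mk S (φ (FreeGroup.of y)))
        = (PresentedGroup.mk S).comp φ := by
      apply FreeGroup.ext_hom; intro y; simp
    rw [hl]
    obtain ⟨q, r₀, hr₀mem, rfl⟩ := hR₀ r hr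
    simp only [MonoidHom.comp_apply]
    rw [hkey2, presented_mk_rel_one (hmemS4 r₀ hr₀mem)]
    simp
  set χ : PresentedGroup R →* PresentedGroup S := PresentedGroup.toGroup hχrel with hχdef
  have hretr : ∀ g : PresentedGroup R, ψ (χ g) = g := by
    have hid : ψ.comp χ = MonoidHom.id (PresentedGroup R) := by
      apply PresentedGroup.ext; intro y
      simp only [MonoidHom.comp_apply, MonoidHom.id_apply]
      rw [hχdef]
      rw [PresentedGroup.toGroup.of hχrel]
      rw [hψmk, hlift_φ]
      rfl
    intro g; exact DFunLike.congr_fun hid g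
  exact fp_of_retract (fp_of_finite_presentation S hSfin (MulEquiv.refl _)) χ ψ hretr
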